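/- For every r ∈ ℝ, Û(r) = exp(rÂ) B, where Â is the matrix obtained from A by keeping exactly its first subdiagonal blocks in the adapted basis. -/

import Mathlib

open Matrix MeasureTheory

noncomputable section

/-- The span of the vectors `A^l B v` for `l < N`, `v ∈ ℝ^m`; for `N = k` this is `E_k`. -/
def kalmanSpan (d m : ℕ) (A : Matrix (Fin d) (Fin d) ℝ) (B : Matrix (Fin d) (Fin m) ℝ)
    (N : ℕ) : Submodule ℝ (Fin d → ℝ) :=
  Submodule.span ℝ {x | ∃ l, l < N ∧ ∃ v : Fin m → ℝ, x = (A ^ l * B).mulVec v}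

/-- `d_k = dim E_k` (with `d_0 = 0`). -/
def dk {d m : ℕ} (A : Matrix (Fin d) (Fin d) ℝ) (B : Matrix (Fin d) (Fin m) ℝ) (k : ℕ) : ℕ :=
  Module.finrank ℝ (kalmanSpan d m A B k)

/-- The level of an index `j` (zero-based): the unique `k ≥ 1` with `d_{k−1} ≤ j < d_k`
(zero-based), i.e. `d_{k−1} < j+1 ≤ d_k` in one-based labelling. -/
def lvl {d m : ℕ} (A : Matrix (Fin d) (Fin d) ℝ) (B : Matrix (Fin d) (Fin m) ℝ)
    (j : Fin d) : ℕ :=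
  sInf {k : ℕ | (j : ℕ) < dk A B k}

/-- The entries of the matrices `u_k`, arranged as a `d × m` array:
for `d_{k−1} < j ≤ d_k` (one-based) the `j`-th row of `u_k` is
`(⟨e_j, A^{k−1} B e_i⟩ / (k−1)!)_i`. -/
def uEnt {d m : ℕ} (A : Matrix (Fin d) (Fin d) ℝ) (B : Matrix (Fin d) (Fin m) ℝ)
    (e : Fin d → Fin d → ℝ) (j : Fin d) (i : Fin m) : ℝ :=
  (e j ⬝ᵥ fun a => (A ^ (lvl A B j - 1) * B) a i) / Nat.factorial (lvl A B j - 1)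

/-- `Û(r)`: the `d × m` matrix whose `j`-th row, for `d_{k−1} < j ≤ d_k`, is `r^{k−1}`
times the corresponding row of `u_k`. -/
def Uhat {d m : ℕ} (A : Matrix (Fin d) (Fin d) ℝ) (B : Matrix (Fin d) (Fin m) ℝ)
    (e : Fin d → Fin d → ℝ) (r : ℝ) : Matrix (Fin d) (Fin m) ℝ :=
  Matrix.of fun j i => r ^ (lvl A B j - 1) * uEnt A B e j i

/-- `J_t`: the diagonal matrix whose `j`-th diagonal entry, for `d_{k−1} < j ≤ d_k`,
is `t^{k−1/2}` (real power). -/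
def Jmat {d m : ℕ} (A : Matrix (Fin d) (Fin d) ℝ) (B : Matrix (Fin d) (Fin m) ℝ)
    (t : ℝ) : Matrix (Fin d) (Fin d) ℝ :=
  Matrix.diagonal fun j => t ^ ((lvl A B j : ℝ) - 1 / 2)

/-- `D_ε`: the diagonal matrix whose `j`-th diagonal entry, for `d_{k−1} < j ≤ d_k`,
is `ε^{k−1}`. -/
def Dmat {d m : ℕ} (A : Matrix (Fin d) (Fin d) ℝ) (B : Matrix (Fin d) (Fin m) ℝ)
    (ε : ℝ) : Matrix (Fin d) (Fin d) ℝ :=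
  Matrix.diagonal fun j => ε ^ (lvl A B j - 1)

/-- `V`: the `n × n` block matrix with `(k,l)`-block
`V_{kl} = (−1)^{l+1} u_k u_l* (k−1)!(l−1)!/(k+l−1)!`, written entrywise. -/
def Vmat {d m : ℕ} (A : Matrix (Fin d) (Fin d) ℝ) (B : Matrix (Fin d) (Fin m) ℝ)
    (e : Fin d → Fin d → ℝ) : Matrix (Fin d) (Fin d) ℝ :=
  Matrix.of fun a b =>
    (-1 : ℝ) ^ (lvl A B b + 1) *
      ((Nat.factorial (lvl A B a - 1) * Nat.factorial (lvl A B b - 1) : ℝ) /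
        Nat.factorial (lvl A B a + lvl A B b - 1)) *
      ∑ i : Fin m, uEnt A B e a i * uEnt A B e b i

open Classical in
/-- `Â`: the matrix characterised in the orthonormal basis `e` by
`⟨e_i, Â e_j⟩ = ⟨e_i, A e_j⟩` whenever there is `k ∈ {1,…,n−1}` with
`d_{k−1} < j ≤ d_k` and `d_k < i ≤ d_{k+1}` (one-based indices), and
`⟨e_i, Â e_j⟩ = 0` otherwise. -/
def Ahat {d m : ℕ} (A : Matrix (Fin d) (Fin d) ℝ) (B : Matrix (Fin d) (Fin m) ℝ)
    (e : Fin d → Fin d → ℝ) (n : ℕ) : Matrix (Fin d) (Fin d) ℝ :=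
  Matrix.of fun a b =>
    ∑ i : Fin d, ∑ j : Fin d,
      (if ∃ k, 1 ≤ k ∧ k ≤ n - 1 ∧
            (dk A B (k - 1) < (j : ℕ) + 1 ∧ (j : ℕ) + 1 ≤ dk A B k) ∧
            (dk A B k < (i : ℕ) + 1 ∧ (i : ℕ) + 1 ≤ dk A B (k + 1))
        then e i ⬝ᵥ A.mulVec (e j) else 0) * e i a * e j b

section Aux

variable {d m n : ℕ} {A : Matrix (Fin d) (Fin d) ℝ} {B : Matrix (Fin d) (Fin m) ℝ}
  {e : Fin d → Fin d → ℝ}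

private def dpLM (v : Fin d → ℝ) : (Fin d → ℝ) →ₗ[ℝ] ℝ where
  toFun y := v ⬝ᵥ y
  map_add' a b := dotProduct_add v a b
  map_smul' c a := by simp [dotProduct_smul]

@[simp] private lemma dpLM_apply (v y : Fin d → ℝ) : dpLM v y = v ⬝ᵥ y := rfl

private lemma dot_sum (v : Fin d → ℝ) {ι : Type*} (s : Finset ι) (f : ι → Fin d → ℝ) :
    v ⬝ᵥ (∑ t ∈ s, f t) = ∑ t ∈ s, v ⬝ᵥ f t :=
  map_sum (dpLM v) f s

private lemma kalmanSpan_mono {N N' : ℕ} (h : N ≤ N') :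
    kalmanSpan d m A B N ≤ kalmanSpan d m A B N' :=
  Submodule.span_mono fun x hx => by
    obtain ⟨l, hl, v, hv⟩ := hx
    exact ⟨l, lt_of_lt_of_le hl h, v, hv⟩

private lemma dk_zero : dk A B 0 = 0 := by
  have h : kalmanSpan d m A B 0 = ⊥ := by
    rw [kalmanSpan, show {x : Fin d → ℝ | ∃ l, l < 0 ∧ ∃ v : Fin m → ℝ, x = (A ^ l * B).mulVec v}
        = ∅ by ext x; simp, Submodule.span_empty]
  rw [dk, h, finrank_bot]

private lemma dk_mono : Monotone (dk A B) :=
  fun _ _ h => Submodule.finrank_mono (kalmanSpan_mono h)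

private lemma dk_n (hK : kalmanSpan d m A B n = ⊤) : dk A B n = d := by
  rw [dk, hK, finrank_top, Module.finrank_fin_fun]

private lemma lvl_lt (hK : kalmanSpan d m A B n = ⊤) (j : Fin d) :
    (j : ℕ) < dk A B (lvl A B j) := by
  have hn : n ∈ {k | (j : ℕ) < dk A B k} := by
    simp only [Set.mem_setOf_eq, dk_n hK]; exact j.isLt
  exact Nat.sInf_mem ⟨n, hn⟩

private lemma lvl_le (hK : kalmanSpan d m A B n = ⊤) (j : Fin d) : lvl A B j ≤ n :=
  Nat.sInf_le (by simp only [Set.mem_setOf_eq, dk_n hK]; exact j.isLt)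

private lemma lvl_pos (hK : kalmanSpan d m A B n = ⊤) (j : Fin d) : 1 ≤ lvl A B j := by
  rcases Nat.eq_zero_or_pos (lvl A B j) with h | h
  · have h2 := lvl_lt hK j
    rw [h, dk_zero] at h2; omega
  · exact h

private lemma dk_le_of_lvl_gt {j : Fin d} {k : ℕ} (h : k < lvl A B j) : dk A B k ≤ (j : ℕ) := by
  by_contra h'
  push_neg at h'
  have h2 : lvl A B j ≤ k := Nat.sInf_le h'
  omega

private lemma dk_lvl_pred_le (hK : kalmanSpan d m A B n = ⊤) (j : Fin d) :
    dk A B (lvl A B j - 1) ≤ (j : ℕ) := by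
  have := lvl_pos hK j
  exact dk_le_of_lvl_gt (by omega)

private lemma lvl_eq (hK : kalmanSpan d m A B n = ⊤) {j : Fin d} {k : ℕ} (hk : 1 ≤ k)
    (h1 : dk A B (k - 1) ≤ (j : ℕ)) (h2 : (j : ℕ) < dk A B k) : lvl A B j = k := by
  have hle : lvl A B j ≤ k := Nat.sInf_le h2
  by_contra hne
  have hlt : lvl A B j < k := lt_of_le_of_ne hle hne
  have hmono : dk A B (lvl A B j) ≤ dk A B (k - 1) := dk_mono (by omega)
  have := lvl_lt hK j
  omega

private lemma n_pos (hd : 0 < d) (hK : kalmanSpan d m A B n = ⊤) : 1 ≤ n := by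
  by_contra h
  have hn0 : n = 0 := by omega
  have h1 := dk_n hK
  rw [hn0] at h1
  rw [dk_zero] at h1
  omega

private lemma cond_iff (hK : kalmanSpan d m A B n = ⊤) (i a : Fin d) :
    (∃ k, 1 ≤ k ∧ k ≤ n - 1 ∧
        (dk A B (k - 1) < (a : ℕ) + 1 ∧ (a : ℕ) + 1 ≤ dk A B k) ∧
        (dk A B k < (i : ℕ) + 1 ∧ (i : ℕ) + 1 ≤ dk A B (k + 1))) ↔
      lvl A B i = lvl A B a + 1 := by
  constructor
  · rintro ⟨k, hk1, hkn, ⟨ha1, ha2⟩, ⟨hi1, hi2⟩⟩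
    have hla : lvl A B a = k := lvl_eq hK hk1 (by omega) (by omega)
    have hli : lvl A B i = k + 1 := by
      refine lvl_eq hK (by omega) ?_ (by omega)
      rw [Nat.add_sub_cancel]; omega
    omega
  · intro h
    have h1 := dk_lvl_pred_le hK a
    have h2 := lvl_lt hK a
    have h3 := dk_lvl_pred_le hK i
    have h4 := lvl_lt hK i
    have h5 := lvl_le hK i
    have h6 := lvl_pos hK a
    rw [h, Nat.add_sub_cancel] at h3
    rw [h] at h4
    exact ⟨lvl A B a, h6, by omega, ⟨by omega, by omega⟩, ⟨by omega, by omega⟩⟩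

private lemma dot_eq_zero_of_mem
    (h_on : ∀ i j : Fin d, e i ⬝ᵥ e j = if i = j then (1:ℝ) else 0)
    (h_adapt : ∀ k : ℕ, 1 ≤ k → k ≤ n →
      kalmanSpan d m A B k =
        Submodule.span ℝ {x | ∃ j : Fin d, (j : ℕ) < dk A B k ∧ x = e j})
    {k : ℕ} (hk1 : 1 ≤ k) (hkn : k ≤ n) {x : Fin d → ℝ}
    (hx : x ∈ kalmanSpan d m A B k) {j : Fin d} (hj : dk A B k ≤ (j : ℕ)) :
    e j ⬝ᵥ x = 0 := by
  rw [h_adapt k hk1 hkn] at hx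
  have hsub : Submodule.span ℝ {x | ∃ a : Fin d, (a : ℕ) < dk A B k ∧ x = e a} ≤
      LinearMap.ker (dpLM (e j)) := by
    rw [Submodule.span_le]
    rintro y ⟨a, ha, rfl⟩
    have hne : j ≠ a := by
      intro h; subst h; omega
    simp [LinearMap.mem_ker, h_on j a, hne]
  simpa using hsub hx

private lemma colB_mem (p : ℕ) (i : Fin m) :
    (fun a => (A ^ p * B) a i) ∈ kalmanSpan d m A B (p + 1) := by
  apply Submodule.subset_span
  refine ⟨p, Nat.lt_succ_self p, Pi.single i 1, ?_⟩
  funext a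
  simp [Matrix.mulVec_single]

private lemma mulVec_mem {k : ℕ} {x : Fin d → ℝ} (hx : x ∈ kalmanSpan d m A B k) :
    A *ᵥ x ∈ kalmanSpan d m A B (k + 1) := by
  have hsub : {x : Fin d → ℝ | ∃ l, l < k ∧ ∃ v : Fin m → ℝ, x = (A ^ l * B).mulVec v} ⊆
      ((kalmanSpan d m A B (k + 1)).comap A.mulVecLin : Set (Fin d → ℝ)) := by
    rintro y ⟨l, hl, v, rfl⟩
    simp only [Submodule.mem_comap, Matrix.mulVecLin_apply, SetLike.mem_coe]
    rw [Matrix.mulVec_mulVec, ← Matrix.mul_assoc, ← pow_succ']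
    exact Submodule.subset_span ⟨l + 1, by omega, v, rfl⟩
  simpa using Submodule.span_le.mpr hsub hx

private lemma e_mem (hK : kalmanSpan d m A B n = ⊤)
    (h_adapt : ∀ k : ℕ, 1 ≤ k → k ≤ n →
      kalmanSpan d m A B k =
        Submodule.span ℝ {x | ∃ j : Fin d, (j : ℕ) < dk A B k ∧ x = e j})
    (a : Fin d) : e a ∈ kalmanSpan d m A B (lvl A B a) := by
  rw [h_adapt _ (lvl_pos hK a) (lvl_le hK a)]
  exact Submodule.subset_span ⟨a, lvl_lt hK a, rfl⟩

private lemma expand (hd : 0 < d) (hK : kalmanSpan d m A B n = ⊤)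
    (h_on : ∀ i j : Fin d, e i ⬝ᵥ e j = if i = j then (1:ℝ) else 0)
    (h_adapt : ∀ k : ℕ, 1 ≤ k → k ≤ n →
      kalmanSpan d m A B k =
        Submodule.span ℝ {x | ∃ j : Fin d, (j : ℕ) < dk A B k ∧ x = e j})
    (y : Fin d → ℝ) : ∑ a, (e a ⬝ᵥ y) • e a = y := by
  have hy : y ∈ kalmanSpan d m A B n := hK ▸ Submodule.mem_top
  rw [h_adapt n (n_pos hd hK) le_rfl] at hy
  induction hy using Submodule.span_induction with
  | mem x hx =>
    obtain ⟨b, _, rfl⟩ := hx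
    have h : ∀ a, (e a ⬝ᵥ e b) • e a = if a = b then e b else 0 := by
      intro a
      rw [h_on a b]
      by_cases h : a = b <;> simp [h]
    simp_rw [h]
    simp
  | zero => simp
  | add x z hx hz ihx ihz =>
    simp only [dotProduct_add, add_smul, Finset.sum_add_distrib]
    rw [ihx, ihz]
  | smul c x hx ih =>
    simp only [dotProduct_smul, smul_eq_mul, mul_smul, ← Finset.smul_sum, ih]

section Aux2

variable {d m n : ℕ} {A : Matrix (Fin d) (Fin d) ℝ} {B : Matrix (Fin d) (Fin m) ℝ}
  {e : Fin d → Fin d → ℝ}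

private lemma sum_mulVec {ι : Type*} (s : Finset ι) (M : ι → Matrix (Fin d) (Fin d) ℝ)
    (x : Fin d → ℝ) : (∑ t ∈ s, M t) *ᵥ x = ∑ t ∈ s, (M t) *ᵥ x := by
  funext b
  simp only [Matrix.mulVec, dotProduct, Matrix.sum_apply, Finset.sum_mul,
    Finset.sum_apply]
  rw [Finset.sum_comm]

private lemma vecMulVec_mulVec (u v x : Fin d → ℝ) :
    (vecMulVec u v) *ᵥ x = (v ⬝ᵥ x) • u := by
  funext b
  simp only [Matrix.mulVec, dotProduct, vecMulVec_apply, Pi.smul_apply, smul_eq_mul,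
    Finset.sum_mul]
  exact Finset.sum_congr rfl fun c _ => by ring

private lemma Ahat_eq (hK : kalmanSpan d m A B n = ⊤) :
    Ahat A B e n = ∑ i' : Fin d, ∑ a : Fin d,
      (if lvl A B i' = lvl A B a + 1 then (e i' ⬝ᵥ A *ᵥ e a) else 0) •
        vecMulVec (e i') (e a) := by
  classical
  ext p q
  simp only [Ahat, Matrix.of_apply, Matrix.sum_apply, Matrix.smul_apply, vecMulVec_apply,
    smul_eq_mul, cond_iff hK]
  exact Finset.sum_congr rfl fun i' _ => Finset.sum_congr rfl fun a _ => by ring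

private lemma Ahat_coord (hK : kalmanSpan d m A B n = ⊤)
    (h_on : ∀ i j : Fin d, e i ⬝ᵥ e j = if i = j then (1:ℝ) else 0)
    (x : Fin d → ℝ) (j : Fin d) :
    e j ⬝ᵥ (Ahat A B e n *ᵥ x) =
      ∑ a, (if lvl A B j = lvl A B a + 1 then e j ⬝ᵥ A *ᵥ e a else 0) * (e a ⬝ᵥ x) := by
  classical
  rw [Ahat_eq hK, sum_mulVec, dot_sum]
  have hterm : ∀ i' : Fin d,
      e j ⬝ᵥ ((∑ a : Fin d, (if lvl A B i' = lvl A B a + 1 then (e i' ⬝ᵥ A *ᵥ e a) else 0) •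
          vecMulVec (e i') (e a)) *ᵥ x)
        = (∑ a : Fin d, (if lvl A B i' = lvl A B a + 1 then (e i' ⬝ᵥ A *ᵥ e a) else 0) *
            (e a ⬝ᵥ x)) * (if j = i' then (1:ℝ) else 0) := by
    intro i'
    rw [sum_mulVec, dot_sum, Finset.sum_mul]
    apply Finset.sum_congr rfl
    intro a _
    rw [smul_mulVec, vecMulVec_mulVec, dotProduct_smul, dotProduct_smul, h_on j i']
    simp only [smul_eq_mul]
    ring
  simp_rw [hterm, mul_ite, mul_one, mul_zero]
  rw [Finset.sum_ite_eq Finset.univ j]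
  simp

private lemma pow_coord_zero (hK : kalmanSpan d m A B n = ⊤)
    (h_on : ∀ i j : Fin d, e i ⬝ᵥ e j = if i = j then (1:ℝ) else 0) (p : ℕ) :
    ∀ (x : Fin d → ℝ) (j : Fin d), lvl A B j ≤ p →
      e j ⬝ᵥ ((Ahat A B e n) ^ p *ᵥ x) = 0 := by
  induction p with
  | zero =>
    intro x j h
    have := lvl_pos hK j
    omega
  | succ p ih =>
    intro x j h
    have hstep : (Ahat A B e n) ^ (p + 1) *ᵥ x = Ahat A B e n *ᵥ ((Ahat A B e n) ^ p *ᵥ x) := by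
      rw [pow_succ', ← Matrix.mulVec_mulVec]
    rw [hstep, Ahat_coord hK h_on]
    apply Finset.sum_eq_zero
    intro a _
    by_cases hc : lvl A B j = lvl A B a + 1
    · rw [ih x a (by omega), mul_zero]
    · rw [if_neg hc, zero_mul]

private lemma eq_zero_of_coords (hd : 0 < d) (hK : kalmanSpan d m A B n = ⊤)
    (h_on : ∀ i j : Fin d, e i ⬝ᵥ e j = if i = j then (1:ℝ) else 0)
    (h_adapt : ∀ k : ℕ, 1 ≤ k → k ≤ n →
      kalmanSpan d m A B k =
        Submodule.span ℝ {x | ∃ j : Fin d, (j : ℕ) < dk A B k ∧ x = e j})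
    {y : Fin d → ℝ} (h : ∀ a, e a ⬝ᵥ y = 0) : y = 0 := by
  have hy := expand hd hK h_on h_adapt y
  rw [← hy]
  apply Finset.sum_eq_zero
  intro a _
  rw [h a, zero_smul]

private lemma Ahat_pow_eq_zero (hd : 0 < d) (hK : kalmanSpan d m A B n = ⊤)
    (h_on : ∀ i j : Fin d, e i ⬝ᵥ e j = if i = j then (1:ℝ) else 0)
    (h_adapt : ∀ k : ℕ, 1 ≤ k → k ≤ n →
      kalmanSpan d m A B k =
        Submodule.span ℝ {x | ∃ j : Fin d, (j : ℕ) < dk A B k ∧ x = e j})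
    {p : ℕ} (hp : n ≤ p) : (Ahat A B e n) ^ p = 0 := by
  ext a b
  have hz : ((Ahat A B e n) ^ p *ᵥ Pi.single b 1) = 0 :=
    eq_zero_of_coords hd hK h_on h_adapt fun j =>
      pow_coord_zero hK h_on p _ j (le_trans (lvl_le hK j) hp)
  simpa [Matrix.mulVec_single] using congrFun hz a
private lemma claim (hd : 0 < d) (hK : kalmanSpan d m A B n = ⊤)
    (h_on : ∀ i j : Fin d, e i ⬝ᵥ e j = if i = j then (1:ℝ) else 0)
    (h_adapt : ∀ k : ℕ, 1 ≤ k → k ≤ n →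
      kalmanSpan d m A B k =
        Submodule.span ℝ {x | ∃ j : Fin d, (j : ℕ) < dk A B k ∧ x = e j})
    (p : ℕ) (i : Fin m) (j : Fin d) :
    e j ⬝ᵥ (fun a => ((Ahat A B e n) ^ p * B) a i) =
      if lvl A B j = p + 1 then e j ⬝ᵥ (fun a => (A ^ p * B) a i) else 0 := by
  classical
  induction p generalizing j with
  | zero =>
    by_cases h : lvl A B j = 1
    · rw [if_pos h]
      simp
    · rw [if_neg h]
      have h2 : 2 ≤ lvl A B j := by
        have := lvl_pos hK j; omega
      have hn : 1 ≤ n := n_pos hd hK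
      have hj : dk A B 1 ≤ (j : ℕ) := dk_le_of_lvl_gt (by omega)
      have hx : (fun a => ((Ahat A B e n) ^ 0 * B : Matrix (Fin d) (Fin m) ℝ) a i) ∈ kalmanSpan d m A B 1 := by
        simpa using colB_mem (A := A) 0 i
      exact dot_eq_zero_of_mem h_on h_adapt le_rfl hn hx hj
  | succ p ih =>
    have hcol : (fun a => ((Ahat A B e n) ^ (p + 1) * B) a i)
        = (Ahat A B e n) *ᵥ (fun a => ((Ahat A B e n) ^ p * B) a i) := by
      funext a
      rw [pow_succ', Matrix.mul_assoc]
      simp [Matrix.mul_apply, Matrix.mulVec, dotProduct]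
    rw [hcol, Ahat_coord hK h_on]
    simp_rw [ih]
    by_cases hj : lvl A B j = p + 2
    · rw [if_pos (by omega : lvl A B j = (p + 1) + 1)]
      have hcolA : (fun a' => (A ^ (p + 1) * B) a' i) = A *ᵥ (fun a' => (A ^ p * B) a' i) := by
        funext a
        rw [pow_succ', Matrix.mul_assoc]
        simp [Matrix.mul_apply, Matrix.mulVec, dotProduct]
      have hexp : e j ⬝ᵥ (fun a' => (A ^ (p + 1) * B) a' i)
          = ∑ a, (e a ⬝ᵥ (fun a' => (A ^ p * B) a' i)) * (e j ⬝ᵥ A *ᵥ e a) := by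
        rw [hcolA]
        conv_lhs => rw [← expand hd hK h_on h_adapt (fun a' => (A ^ p * B) a' i)]
        have hsum : A *ᵥ (∑ a, (e a ⬝ᵥ (fun a' => (A ^ p * B) a' i)) • e a)
            = ∑ a, (e a ⬝ᵥ (fun a' => (A ^ p * B) a' i)) • (A *ᵥ e a) := by
          rw [← Matrix.mulVecLin_apply, map_sum]
          simp
        rw [hsum, dot_sum]
        simp [dotProduct_smul, smul_eq_mul]
      rw [hexp]
      apply Finset.sum_congr rfl
      intro a _
      by_cases ha : lvl A B a = p + 1
      · rw [if_pos (by omega), if_pos ha]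
        ring
      · rcases lt_or_ge (lvl A B a) (p + 1) with hlt | hge
        · have hmem : A *ᵥ e a ∈ kalmanSpan d m A B (lvl A B a + 1) :=
            mulVec_mem (e_mem hK h_adapt a)
          have hjn := lvl_le hK j
          have hdkj : dk A B (p + 1) ≤ (j : ℕ) := dk_le_of_lvl_gt (by omega)
          have h0 : e j ⬝ᵥ (A *ᵥ e a) = 0 :=
            dot_eq_zero_of_mem h_on h_adapt (by omega) (by omega) hmem
              (le_trans (dk_mono (by omega)) hdkj)
          rw [if_neg ha, h0]
          simp
        · have hjn := lvl_le hK j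
          have h0 : e a ⬝ᵥ (fun a' => (A ^ p * B) a' i) = 0 :=
            dot_eq_zero_of_mem h_on h_adapt (by omega : 1 ≤ p + 1) (by omega)
              (colB_mem p i) (dk_le_of_lvl_gt (by omega))
          rw [if_neg ha, h0]
          simp
    · rw [if_neg (by omega : ¬ lvl A B j = p + 1 + 1)]
      apply Finset.sum_eq_zero
      intro a _
      by_cases ha : lvl A B a = p + 1
      · rw [if_neg (by omega), zero_mul]
      · rw [if_neg ha, mul_zero]

end Aux2

/-- For every `r ∈ ℝ`, `Û(r) = exp(rÂ) B`, as matrices expressed in the adapted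
orthonormal basis `e` (rows) and the standard basis of `ℝ^m` (columns). -/
theorem Uhat_eq_exp_Ahat
    (d m : ℕ) (hd : 0 < d) (hm : 0 < m)
    (A : Matrix (Fin d) (Fin d) ℝ) (B : Matrix (Fin d) (Fin m) ℝ)
    (n : ℕ) (hK : kalmanSpan d m A B n = ⊤)
    (hmin : ∀ N : ℕ, kalmanSpan d m A B N = ⊤ → n ≤ N)
    (e : Fin d → Fin d → ℝ)
    (h_on : ∀ i j : Fin d, e i ⬝ᵥ e j = if i = j then (1:ℝ) else 0)
    (h_adapt : ∀ k : ℕ, 1 ≤ k → k ≤ n →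
      kalmanSpan d m A B k =
        Submodule.span ℝ {x | ∃ j : Fin d, (j : ℕ) < dk A B k ∧ x = e j}) :
    ∀ r : ℝ, ∀ j : Fin d, ∀ i : Fin m,
      Uhat A B e r j i =
        e j ⬝ᵥ fun a => (NormedSpace.exp (r • Ahat A B e n) * B) a i := by
  intro r j i
  classical
  have hn1 : 1 ≤ n := n_pos hd hK
  have hk1 : 1 ≤ lvl A B j := lvl_pos hK j
  have hkn : lvl A B j ≤ n := lvl_le hK j
  have hexp : NormedSpace.exp (r • Ahat A B e n)
      = ∑ p ∈ Finset.range n, (p.factorial : ℝ)⁻¹ • (r • Ahat A B e n) ^ p := by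
    rw [NormedSpace.exp_eq_tsum (𝕂 := ℝ)]
    exact tsum_eq_sum fun p hp => by
      rw [smul_pow, Ahat_pow_eq_zero hd hK h_on h_adapt
        (le_of_not_gt fun h => hp (Finset.mem_range.mpr h)), smul_zero, smul_zero]
  rw [hexp]
  have hfun : (fun a => ((∑ p ∈ Finset.range n, (p.factorial : ℝ)⁻¹ • (r • Ahat A B e n) ^ p)
        * B) a i)
      = ∑ p ∈ Finset.range n, ((p.factorial : ℝ)⁻¹ * r ^ p) •
          (fun a => (((Ahat A B e n) ^ p * B : Matrix (Fin d) (Fin m) ℝ)) a i) := by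
    funext a
    rw [Matrix.sum_mul, Matrix.sum_apply, Finset.sum_apply]
    apply Finset.sum_congr rfl
    intro p _
    simp [smul_pow, Matrix.smul_mul, mul_assoc]
  rw [hfun, dot_sum]
  have hterm : ∀ p ∈ Finset.range n,
      e j ⬝ᵥ (((p.factorial : ℝ)⁻¹ * r ^ p) •
          (fun a => (((Ahat A B e n) ^ p * B : Matrix (Fin d) (Fin m) ℝ)) a i))
        = ((p.factorial : ℝ)⁻¹ * r ^ p) *
            (if lvl A B j = p + 1 then e j ⬝ᵥ (fun a => (A ^ p * B) a i) else 0) := by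
    intro p _
    rw [dotProduct_smul, claim hd hK h_on h_adapt p i j, smul_eq_mul]
  rw [Finset.sum_congr rfl hterm]
  rw [Finset.sum_eq_single (lvl A B j - 1)
    (fun p _ hne => by rw [if_neg (by omega), mul_zero])
    (fun hmem => absurd (Finset.mem_range.mpr (by omega)) hmem)]
  rw [if_pos (by omega : lvl A B j = (lvl A B j - 1) + 1)]
  simp only [Uhat, uEnt, Matrix.of_apply, div_eq_mul_inv]
  ring
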